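/- Let B be an approximable integral graded K-algebra with ℝ-filtrations making it f-quasi-filtered (f(n)/n → 0) and with sup_n λ_max(B_n)/n < ∞. Then the sequence (λ_max(B_n)/n)_{n≥1} converges in ℝ. -/

import Mathlib

open Module MeasureTheory Set Filter

/-- Let `B` be an approximable integral graded `K`-algebra
with ℝ-filtrations making it `f`-quasi-filtered (`f(n)/n → 0`) and with
`sup_n λ_max(B_n)/n < ∞`. Then the sequence `(λ_max(B_n)/n)ₙ` converges in `ℝ`.
Here `λ_max(B_n) = sSup {t | F n t ≠ ⊥}`. -/
theorem stmt13 {K A : Type*} [Field K] [CommRing A] [IsDomain A] [Algebra K A]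
    (𝒜 : ℕ → Submodule K A) [GradedAlgebra 𝒜]
    (hfin : ∀ n, FiniteDimensional K ↥(𝒜 n))
    (hne : ∃ N : ℕ, ∀ n ≥ N, 𝒜 n ≠ ⊥)
    (happr : ∀ ε : ℝ, 0 < ε → ε < 1 → ∃ p₀ : ℕ, 1 ≤ p₀ ∧ ∀ p ≥ p₀,
      (1 - ε) < Filter.liminf
        (fun n : ℕ => (finrank K ↥((𝒜 p) ^ n) : ℝ) / (finrank K ↥(𝒜 (n * p)) : ℝ))
        Filter.atTop)
    (F : ℕ → ℝ → Submodule K A)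
    (hFle : ∀ n t, F n t ≤ 𝒜 n)
    (hF_anti : ∀ n, Antitone (F n))
    (hF_bot : ∀ n, ∃ t₀ : ℝ, ∀ t ≥ t₀, F n t = ⊥)
    (hF_top : ∀ n, ∃ t₁ : ℝ, ∀ t ≤ t₁, F n t = 𝒜 n)
    (hF_leftcont : ∀ n, ∀ t : ℝ, F n t = ⨅ (s : ℝ) (_ : s < t), F n s)
    (f : ℕ → ℝ) (hf0 : ∀ n, 0 ≤ f n)
    (hflim : Filter.Tendsto (fun n : ℕ => f n / n) Filter.atTop (nhds 0))
    (n₀ : ℕ)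
    (hqf : ∀ (l : ℕ), 2 ≤ l → ∀ (d : Fin l → ℕ) (t : Fin l → ℝ) (x : Fin l → A),
      (∀ i, n₀ ≤ d i) → (∀ i, x i ∈ F (d i) (t i)) →
      (∏ i, x i) ∈ F (∑ i, d i) (∑ i, (t i - f (d i))))
    (hlmax : ∃ C : ℝ, ∀ n : ℕ, 1 ≤ n → ∀ t : ℝ, F n t ≠ ⊥ → t ≤ C * n) :
    ∃ ℓ : ℝ, Filter.Tendsto
      (fun n : ℕ => sSup {t : ℝ | F n t ≠ ⊥} / n) Filter.atTop (nhds ℓ) := by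
  classical
  obtain ⟨N, hN⟩ := hne
  obtain ⟨C, hC⟩ := hlmax
  set M : ℕ := max N (max n₀ 1) with hM
  have hM1 : 1 ≤ M := le_max_of_le_right (le_max_right _ _)
  have hMN : N ≤ M := le_max_left _ _
  have hMn₀ : n₀ ≤ M := le_max_of_le_right (le_max_left _ _)
  let lam : ℕ → ℝ := fun n => sSup {t : ℝ | F n t ≠ ⊥}
  have hSne : ∀ n, M ≤ n → {t : ℝ | F n t ≠ ⊥}.Nonempty := by
    intro n hn
    obtain ⟨t₁, ht₁⟩ := hF_top n
    exact ⟨t₁, by simp only [Set.mem_setOf_eq, ht₁ t₁ le_rfl]; exact hN n (hMN.trans hn)⟩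
  have hSbdd : ∀ n, 1 ≤ n → BddAbove {t : ℝ | F n t ≠ ⊥} := fun n hn =>
    ⟨C * n, fun t ht => hC n hn t ht⟩
  have hlam_le : ∀ n, M ≤ n → lam n ≤ C * n := fun n hn =>
    csSup_le (hSne n hn) (fun t ht => hC n (hM1.trans hn) t ht)
  -- key superadditivity
  have key : ∀ q p r : ℕ, 1 ≤ q → M ≤ p → M ≤ r →
      (q : ℝ) * (lam p - f p) + (lam r - f r) ≤ lam (q * p + r) := by
    intro q p r hq hp hr
    have hq' : (1 : ℝ) ≤ (q : ℝ) := by exact_mod_cast hq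
    have hqpr1 : 1 ≤ q * p + r := (hM1.trans hr).trans (Nat.le_add_left r (q * p))
    refine le_of_forall_pos_le_add ?_
    intro δ hδ
    set ε : ℝ := δ / (q + 1) with hε
    have hεpos : 0 < ε := by positivity
    obtain ⟨tp, htpS, htp⟩ := exists_lt_of_lt_csSup (hSne p hp)
      (show lam p - ε < lam p by linarith)
    obtain ⟨tr, htrS, htr⟩ := exists_lt_of_lt_csSup (hSne r hr)
      (show lam r - ε < lam r by linarith)
    obtain ⟨xp, hxpF, hxp0⟩ := Submodule.exists_mem_ne_zero_of_ne_bot htpS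
    obtain ⟨xr, hxrF, hxr0⟩ := Submodule.exists_mem_ne_zero_of_ne_bot htrS
    set d : Fin (q + 1) → ℕ := Fin.snoc (fun _ => p) r with hd_def
    set tt : Fin (q + 1) → ℝ := Fin.snoc (fun _ => tp) tr with htt_def
    set xx : Fin (q + 1) → A := Fin.snoc (fun _ => xp) xr with hxx_def
    have hd : ∀ i, n₀ ≤ d i := by
      intro i
      induction i using Fin.lastCases with
      | last => simpa [hd_def] using hMn₀.trans hr
      | cast i => simpa [hd_def] using hMn₀.trans hp
    have hx : ∀ i, xx i ∈ F (d i) (tt i) := by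
      intro i
      induction i using Fin.lastCases with
      | last => simpa [hd_def, htt_def, hxx_def] using hxrF
      | cast i => simpa [hd_def, htt_def, hxx_def] using hxpF
    have hprod := hqf (q + 1) (by omega) d tt xx hd hx
    have hsum_d : ∑ i, d i = q * p + r := by
      rw [Fin.sum_univ_castSucc]
      simp [hd_def, Finset.sum_const, mul_comm]
    have hsum_t : ∑ i, (tt i - f (d i)) = (q : ℝ) * (tp - f p) + (tr - f r) := by
      rw [Fin.sum_univ_castSucc]
      simp [hd_def, htt_def, Finset.sum_const, nsmul_eq_mul]
      ring
    rw [hsum_d, hsum_t] at hprod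
    have hprod0 : (∏ i, xx i) ≠ 0 := by
      rw [Finset.prod_ne_zero_iff]
      intro i _
      induction i using Fin.lastCases with
      | last => simpa [hxx_def] using hxr0
      | cast i => simpa [hxx_def] using hxp0
    have hmem : (q : ℝ) * (tp - f p) + (tr - f r) ∈ {t : ℝ | F (q * p + r) t ≠ ⊥} := by
      intro hbot
      rw [hbot, Submodule.mem_bot] at hprod
      exact hprod0 hprod
    have hle : (q : ℝ) * (tp - f p) + (tr - f r) ≤ lam (q * p + r) :=
      le_csSup (hSbdd _ hqpr1) hmem
    have hδq : (q : ℝ) * ε + ε ≤ δ := by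
      have h : ((q : ℝ) + 1) * ε = δ := by
        rw [hε]; field_simp
      nlinarith
    nlinarith [mul_le_mul_of_nonneg_left (le_of_lt htp) (by linarith : (0:ℝ) ≤ (q:ℝ))]
  -- the candidate limit
  set T : Set ℝ := {x : ℝ | ∃ p : ℕ, M ≤ p ∧ x = (lam p - f p) / p} with hT
  have hTne : T.Nonempty := ⟨(lam M - f M) / M, M, le_rfl, rfl⟩
  have hTbdd : BddAbove T := by
    refine ⟨C, ?_⟩
    rintro x ⟨p, hp, rfl⟩
    have hp0 : (0 : ℝ) < (p : ℝ) := by exact_mod_cast (hM1.trans hp)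
    rw [div_le_iff₀ hp0]
    have h1 := hlam_le p hp
    have h2 := hf0 p
    nlinarith
  refine ⟨sSup T, ?_⟩
  have hgoal : Tendsto (fun n : ℕ => lam n / n) atTop (nhds (sSup T)) := by
    rw [tendsto_order]
    constructor
    · -- lower bound
      intro a ha
      obtain ⟨x, ⟨p, hp, rfl⟩, hax⟩ := exists_lt_of_lt_csSup hTne ha
      have hp1 : 1 ≤ p := hM1.trans hp
      have hp0 : (0 : ℝ) < (p : ℝ) := by exact_mod_cast hp1
      set c : ℝ := lam p - f p with hc
      -- remainder min
      set D : ℝ := (Finset.Ico M (M + p)).inf' (Finset.nonempty_Ico.2 (by omega) : (Finset.Ico M (M + p)).Nonempty)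
        (fun r => lam r - f r) with hD
      have hDle : ∀ r, M ≤ r → r < M + p → D ≤ lam r - f r := by
        intro r h1 h2
        exact Finset.inf'_le _ (Finset.mem_Ico.2 ⟨h1, h2⟩)
      -- decomposition
      set qf : ℕ → ℕ := fun n => (n - M) / p with hqf_def
      set rf : ℕ → ℕ := fun n => M + (n - M) % p with hrf_def
      have hdecomp : ∀ n, M ≤ n → qf n * p + rf n = n := by
        intro n hn
        have h := Nat.div_add_mod (n - M) p
        have h2 : qf n * p + rf n = p * ((n - M) / p) + (n - M) % p + M := by
          simp only [hqf_def, hrf_def]; ring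
        rw [h2, h]; omega
      have hlow : ∀ n, M + p ≤ n → (qf n : ℝ) * c + D ≤ lam n := by
        intro n hn
        have hq1 : 1 ≤ qf n := by
          have : p ≤ n - M := by omega
          exact Nat.one_le_div_iff (by omega) |>.2 this
        have hrM : M ≤ rf n := by simp [hrf_def]
        have hrlt : rf n < M + p := by
          have := Nat.mod_lt (n - M) (show 0 < p by omega)
          simp [hrf_def]; omega
        have := key (qf n) p (rf n) hq1 hp hrM
        rw [hdecomp n (by omega)] at this
        have hD' := hDle (rf n) hrM hrlt
        nlinarith
      -- tendsto of the lower bound function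
      have hq_div : Tendsto (fun n : ℕ => (qf n : ℝ) / n) atTop (nhds (1 / p)) := by
        have hlb : Tendsto (fun n : ℕ => 1 / (p : ℝ) - ((M : ℝ) + p) / p * (1 / n))
            atTop (nhds (1 / p)) := by
          have := (tendsto_one_div_atTop_nhds_zero_nat.const_mul (((M : ℝ) + p) / p)).const_sub
            (1 / (p : ℝ))
          simpa using this
        have hub : Tendsto (fun _ : ℕ => 1 / (p : ℝ)) atTop (nhds (1 / p)) := tendsto_const_nhds
        refine tendsto_of_tendsto_of_tendsto_of_le_of_le' hlb hub ?_ ?_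
        · filter_upwards [eventually_ge_atTop (M + p)] with n hn
          have hn0 : (0 : ℝ) < (n : ℝ) := by exact_mod_cast (by omega : 0 < n)
          have hkey : (n : ℝ) - M - p ≤ (qf n : ℝ) * p := by
            have h1 : p * qf n + (n - M) % p = n - M := Nat.div_add_mod (n - M) p
            have h2 : (n - M) % p < p := Nat.mod_lt _ (by omega)
            have h3 : ((n - M : ℕ) : ℝ) = (n : ℝ) - M := by
              rw [Nat.cast_sub (by omega : M ≤ n)]
            have h4 : ((p * qf n : ℕ) : ℝ) + (((n - M) % p : ℕ) : ℝ) = (n : ℝ) - M := by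
              rw [← h3, ← Nat.cast_add, h1]
            push_cast at h4 ⊢
            have h5 : (((n - M) % p : ℕ) : ℝ) ≤ (p : ℝ) := by exact_mod_cast h2.le
            nlinarith
          have heq : 1 / (p : ℝ) - ((M : ℝ) + p) / p * (1 / n) = ((n : ℝ) - M - p) / (p * n) := by
            field_simp
            ring
          rw [heq, div_le_div_iff₀ (by positivity) hn0]
          nlinarith
        · filter_upwards [eventually_ge_atTop 1] with n hn
          have hn0 : (0 : ℝ) < (n : ℝ) := by exact_mod_cast hn
          rw [div_le_div_iff₀ hn0 hp0]
          have hnat : qf n * p ≤ n := by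
            have h1 : qf n * p ≤ n - M := Nat.div_mul_le_self (n - M) p
            omega
          rw [one_mul]
          exact_mod_cast hnat
      have hg : Tendsto (fun n : ℕ => (qf n : ℝ) / n * c + D * (1 / n)) atTop
          (nhds (1 / p * c + D * 0)) :=
        (hq_div.mul_const c).add (tendsto_one_div_atTop_nhds_zero_nat.const_mul D)
      have hcp : a < 1 / (p : ℝ) * c + D * 0 := by
        rw [mul_zero, add_zero]
        calc a < (lam p - f p) / p := hax
          _ = 1 / (p : ℝ) * c := by rw [hc]; ring
      filter_upwards [hg.eventually (eventually_gt_nhds hcp), eventually_ge_atTop (M + p)]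
        with n h1 h2
      have hn0 : (0 : ℝ) < (n : ℝ) := by exact_mod_cast (by omega : 0 < n)
      have h3 := hlow n h2
      have h4 : (qf n : ℝ) / n * c + D * (1 / n) ≤ lam n / n := by
        rw [div_mul_eq_mul_div, mul_one_div, ← add_div]
        gcongr
      exact lt_of_lt_of_le h1 h4
    · -- upper bound
      intro b hb
      have hub : ∀ n, M ≤ n → lam n / n ≤ sSup T + f n / n := by
        intro n hn
        have hn0 : (0 : ℝ) < (n : ℝ) := by exact_mod_cast (hM1.trans hn)
        have hmem : (lam n - f n) / n ∈ T := ⟨n, hn, rfl⟩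
        have := le_csSup hTbdd hmem
        rw [sub_div] at this
        linarith
      have hev : ∀ᶠ n : ℕ in atTop, f n / n < b - sSup T := by
        have := hflim.eventually (eventually_lt_nhds (show (0:ℝ) < b - sSup T by linarith))
        simpa using this
      filter_upwards [hev, eventually_ge_atTop M] with n h1 h2
      have := hub n h2
      linarith
  exact hgoal
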